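/- Let m > 1, c > 0, and s₀ ∈ ℝ, and define W_{s₀}(s,t) = [ c − e^{(m−1)(s − s₀ − ct)/m} ]₊^{1/(m−1)} for (s,t) ∈ ℝ × (0,∞). Then W_{s₀} is continuous on ℝ × (0,∞), satisfies lim_{s→−∞} W_{s₀}(s,t) = c^{1/(m−1)} and W_{s₀}(s,t) = 0 for s ≥ s₀ + ct + (m/(m−1)) log c, and on the open set { (s,t) : c − e^{(m−1)(s − s₀ − ct)/m} > 0 } it is a classical solution of the porous medium equation with convection: ∂_t W_{s₀}(s,t) = ∂_ss(W_{s₀}^m)(s,t) − ∂_s(W_{s₀}^m)(s,t). -/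

import Mathlib

open Real Set Filter Topology

noncomputable section

/-- **Traveling waves for the PME with convection (Eq. (4.5)).** Let `m > 1`, `c > 0`,
`s₀ ∈ ℝ` and `W_{s₀}(s,t) = [c - e^{(m-1)(s-s₀-ct)/m}]₊^{1/(m-1)}`.  Then `W_{s₀}` is
continuous on `ℝ × (0,∞)`, tends to `c^{1/(m-1)}` as `s → -∞` (for each `t > 0`),
vanishes for `s ≥ s₀ + ct + (m/(m-1)) log c`, and on the open set where
`c - e^{(m-1)(s-s₀-ct)/m} > 0` it is a classical solution of
`∂ₜ W = ∂ₛₛ(W^m) - ∂ₛ(W^m)`. -/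
theorem travelingWave_solution
    (m c s₀ : ℝ) (hm : 1 < m) (hc : 0 < c)
    (W : ℝ → ℝ → ℝ)
    (hW : ∀ s t, W s t =
      (max (c - Real.exp ((m - 1) * (s - s₀ - c * t) / m)) 0) ^ (1 / (m - 1))) :
    ContinuousOn (fun p : ℝ × ℝ => W p.1 p.2) (univ ×ˢ Ioi 0) ∧
    (∀ t : ℝ, 0 < t → Tendsto (fun s => W s t) atBot (𝓝 (c ^ (1 / (m - 1))))) ∧
    (∀ t : ℝ, 0 < t → ∀ s : ℝ, s₀ + c * t + (m / (m - 1)) * Real.log c ≤ s →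
      W s t = 0) ∧
    (∀ s t : ℝ, 0 < t → 0 < c - Real.exp ((m - 1) * (s - s₀ - c * t) / m) →
      DifferentiableAt ℝ (fun τ => W s τ) t ∧
      DifferentiableAt ℝ (fun σ => W σ t ^ m) s ∧
      DifferentiableAt ℝ (deriv (fun σ => W σ t ^ m)) s ∧
      deriv (fun τ => W s τ) t
        = iteratedDeriv 2 (fun σ => W σ t ^ m) s - deriv (fun σ => W σ t ^ m) s) := by
  have hm1 : (0:ℝ) < m - 1 := by linarith
  have hm0 : (0:ℝ) < m := by linarith
  have hb : (0:ℝ) < 1 / (m - 1) := div_pos one_pos hm1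
  -- outer rpow function is continuous everywhere since the exponent is positive
  have houter : Continuous fun x : ℝ => x ^ (1 / (m - 1)) :=
    continuous_iff_continuousAt.mpr fun x =>
      Real.continuousAt_rpow_const x _ (Or.inr hb.le)
  refine ⟨?_, ?_, ?_, ?_⟩
  · -- continuity
    have h1 : (fun p : ℝ × ℝ => W p.1 p.2) = fun p : ℝ × ℝ =>
        (max (c - Real.exp ((m - 1) * (p.1 - s₀ - c * p.2) / m)) 0) ^ (1 / (m - 1)) := by
      funext p; exact hW p.1 p.2
    rw [h1]
    have hinner : Continuous fun p : ℝ × ℝ =>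
        max (c - Real.exp ((m - 1) * (p.1 - s₀ - c * p.2) / m)) 0 := by
      fun_prop
    exact (houter.comp hinner).continuousOn
  · -- limit at -∞
    intro t ht
    have h1 : (fun s => W s t) = fun s =>
        (max (c - Real.exp ((m - 1) * (s - s₀ - c * t) / m)) 0) ^ (1 / (m - 1)) := by
      funext s; exact hW s t
    rw [h1]
    have harg : Tendsto (fun s : ℝ => (m - 1) * (s - s₀ - c * t) / m) atBot atBot := by
      have heq : (fun s : ℝ => (m - 1) * (s - s₀ - c * t) / m) =
          fun s : ℝ => (m - 1) / m * s + (-((m - 1) * (s₀ + c * t) / m)) := by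
        funext s; field_simp; ring
      rw [heq]
      exact tendsto_atBot_add_const_right _ _
        (tendsto_id.const_mul_atBot (div_pos hm1 hm0))
    have hexp : Tendsto (fun s : ℝ => Real.exp ((m - 1) * (s - s₀ - c * t) / m))
        atBot (𝓝 0) := Real.tendsto_exp_atBot.comp harg
    have hmax : Tendsto (fun s : ℝ =>
        max (c - Real.exp ((m - 1) * (s - s₀ - c * t) / m)) 0) atBot (𝓝 c) := by
      have := ((tendsto_const_nhds : Tendsto (fun _ : ℝ => c) atBot (𝓝 c)).sub hexp).max
        (tendsto_const_nhds : Tendsto (fun _ : ℝ => (0:ℝ)) atBot (𝓝 (0:ℝ)))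
      simpa [max_eq_left hc.le] using this
    exact ((Real.continuousAt_rpow_const c _ (Or.inl hc.ne')).tendsto).comp hmax
  · -- vanishing
    intro t ht s hs
    have hlog : Real.log c ≤ (m - 1) * (s - s₀ - c * t) / m := by
      have h2 : m / (m - 1) * Real.log c ≤ s - s₀ - c * t := by linarith
      have h3 := mul_le_mul_of_nonneg_left h2 (le_of_lt (div_pos hm1 hm0))
      calc Real.log c = (m - 1) / m * (m / (m - 1) * Real.log c) := by
            field_simp
        _ ≤ (m - 1) / m * (s - s₀ - c * t) := h3
        _ = (m - 1) * (s - s₀ - c * t) / m := by ring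
    have hexp : c ≤ Real.exp ((m - 1) * (s - s₀ - c * t) / m) := by
      calc c = Real.exp (Real.log c) := (Real.exp_log hc).symm
        _ ≤ _ := Real.exp_le_exp.mpr hlog
    rw [hW, max_eq_right (by linarith), Real.zero_rpow hb.ne']
  · -- the PDE
    intro s t ht hpos
    set E : ℝ → ℝ := fun σ => Real.exp ((m - 1) * (σ - s₀ - c * t) / m) with hE
    have hEpos : ∀ σ, 0 < E σ := fun σ => Real.exp_pos _
    set U : Set ℝ := {σ | 0 < c - E σ} with hUdef
    have hUo : IsOpen U :=
      isOpen_lt continuous_const (continuous_const.sub (by fun_prop))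
    have hsU : s ∈ U := hpos
    -- derivative of the affine argument in σ
    have h1 : ∀ σ : ℝ, HasDerivAt (fun σ : ℝ => (m - 1) * (σ - s₀ - c * t) / m)
        ((m - 1) / m) σ := by
      intro σ
      have heq : (fun σ : ℝ => (m - 1) * (σ - s₀ - c * t) / m) =
          fun σ : ℝ => (m - 1) / m * σ + (-((m - 1) * (s₀ + c * t) / m)) := by
        funext x; field_simp; ring
      rw [heq]
      simpa using ((hasDerivAt_id σ).const_mul ((m - 1) / m)).add_const (-((m - 1) * (s₀ + c * t) / m))
    -- derivative of σ ↦ c - E σ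
    have hCE : ∀ σ : ℝ, HasDerivAt (fun σ => c - E σ) (-(E σ * ((m - 1) / m))) σ := by
      intro σ
      exact ((h1 σ).exp).const_sub c
    -- G : the smooth version of W^m
    set G : ℝ → ℝ := fun σ => (c - E σ) ^ (m / (m - 1)) with hG
    have hFGset : ∀ σ ∈ U, W σ t ^ m = G σ := by
      intro σ hσ
      have hσ' : (0:ℝ) < c - E σ := hσ
      rw [hW, max_eq_left hσ'.le, ← Real.rpow_mul hσ'.le]
      show (c - E σ) ^ (1 / (m - 1) * m) = (c - E σ) ^ (m / (m - 1))
      congr 1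
      field_simp
    have hderivG : ∀ σ ∈ U, HasDerivAt G (-(E σ * (c - E σ) ^ (1 / (m - 1)))) σ := by
      intro σ hσ
      have hσ' : (0:ℝ) < c - E σ := hσ
      have h := (hCE σ).rpow_const (p := m / (m - 1)) (Or.inl hσ'.ne')
      have hexpo : m / (m - 1) - 1 = 1 / (m - 1) := by field_simp; ring
      convert h using 1
      rw [hexpo]
      field_simp
    have hFeq : ∀ σ ∈ U, (fun x => W x t ^ m) =ᶠ[𝓝 σ] G := fun σ hσ =>
      eventuallyEq_of_mem (hUo.mem_nhds hσ) hFGset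
    have hderivF : ∀ σ ∈ U, deriv (fun x => W x t ^ m) σ
        = -(E σ * (c - E σ) ^ (1 / (m - 1))) := fun σ hσ =>
      ((hFeq σ hσ).deriv_eq).trans (hderivG σ hσ).deriv
    -- first derivative function g₁
    set g₁ : ℝ → ℝ := fun σ => -(E σ * (c - E σ) ^ (1 / (m - 1))) with hg₁def
    have hderivF_ev : deriv (fun x => W x t ^ m) =ᶠ[𝓝 s] g₁ :=
      eventuallyEq_of_mem (hUo.mem_nhds hsU) hderivF
    -- second derivative of G at s
    have hHs : HasDerivAt (fun σ => (c - E σ) ^ (1 / (m - 1)))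
        ((-(E s * ((m - 1) / m))) * (1 / (m - 1)) * (c - E s) ^ (1 / (m - 1) - 1)) s :=
      (hCE s).rpow_const (Or.inl hpos.ne')
    have hg₁ : HasDerivAt g₁
        (-((E s * ((m - 1) / m)) * (c - E s) ^ (1 / (m - 1))
          + E s * ((-(E s * ((m - 1) / m))) * (1 / (m - 1)) * (c - E s) ^ (1 / (m - 1) - 1)))) s := by
      exact ((((h1 s).exp).mul hHs)).neg
    -- time derivative
    set Eτ : ℝ → ℝ := fun τ => Real.exp ((m - 1) * (s - s₀ - c * τ) / m) with hEτ
    have hEτt : Eτ t = E s := rfl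
    have h1t : HasDerivAt (fun τ : ℝ => (m - 1) * (s - s₀ - c * τ) / m)
        (-((m - 1) * c / m)) t := by
      have heq : (fun τ : ℝ => (m - 1) * (s - s₀ - c * τ) / m) =
          fun τ : ℝ => (-((m - 1) * c / m)) * τ + (m - 1) * (s - s₀) / m := by
        funext x; field_simp; ring
      rw [heq]
      simpa using ((hasDerivAt_id t).const_mul (-((m - 1) * c / m))).add_const ((m - 1) * (s - s₀) / m)
    have hCEt : HasDerivAt (fun τ => c - Eτ τ) (-(Eτ t * (-((m - 1) * c / m)))) t :=
      (h1t.exp).const_sub c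
    have hWt : HasDerivAt (fun τ => (c - Eτ τ) ^ (1 / (m - 1)))
        ((-(Eτ t * (-((m - 1) * c / m)))) * (1 / (m - 1)) * (c - Eτ t) ^ (1 / (m - 1) - 1)) t := by
      refine hCEt.rpow_const (Or.inl ?_)
      rw [hEτt]; exact hpos.ne'
    have hVt : ∀ᶠ τ in 𝓝 t, 0 < c - Eτ τ := by
      have hV : IsOpen {τ : ℝ | 0 < c - Eτ τ} :=
        isOpen_lt continuous_const (continuous_const.sub (by fun_prop))
      exact hV.mem_nhds (show (0:ℝ) < c - Eτ t from hpos)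
    have hWteq : (fun τ => W s τ) =ᶠ[𝓝 t] fun τ => (c - Eτ τ) ^ (1 / (m - 1)) := by
      filter_upwards [hVt] with τ hτ
      rw [hW, max_eq_left hτ.le]
    -- assemble
    refine ⟨hWt.differentiableAt.congr_of_eventuallyEq hWteq,
      (hderivG s hsU).differentiableAt.congr_of_eventuallyEq (hFeq s hsU),
      hg₁.differentiableAt.congr_of_eventuallyEq hderivF_ev, ?_⟩
    have e1 : deriv (fun τ => W s τ) t
        = (-(Eτ t * (-((m - 1) * c / m)))) * (1 / (m - 1)) * (c - Eτ t) ^ (1 / (m - 1) - 1) :=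
      (hWteq.deriv_eq).trans hWt.deriv
    have e2 : iteratedDeriv 2 (fun σ => W σ t ^ m) s
        = -((E s * ((m - 1) / m)) * (c - E s) ^ (1 / (m - 1))
          + E s * ((-(E s * ((m - 1) / m))) * (1 / (m - 1)) * (c - E s) ^ (1 / (m - 1) - 1))) := by
      rw [show (2:ℕ) = 1 + 1 from rfl, iteratedDeriv_succ, iteratedDeriv_one]
      exact (hderivF_ev.deriv.self_of_nhds).trans hg₁.deriv
    rw [e1, e2, hderivF s hsU, hEτt]
    have hXb : (c - E s) ^ (1 / (m - 1)) = (c - E s) ^ (1 / (m - 1) - 1) * (c - E s) := by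
      rw [← Real.rpow_add_one hpos.ne' (1 / (m - 1) - 1)]
      norm_num
      rfl
    rw [hXb]
    field_simp
    ring
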